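/- Let n ≥ 1 and let π be a permutation of {1,…,n}. For each j ∈ {1,…,n} let d_j = #{m : 1 ≤ m < j and π⁻¹(m) > π⁻¹(j)} (the number of values smaller than j appearing after j in the one-line word of π). Then π is 321-avoiding if and only if for every pair of indices j < j' with d_j ≠ 0, d_{j'} ≠ 0, and d_k = 0 for all k with j < k < j', one has d_{j'} − d_j ≤ j' − j − 1. -/

import Mathlib

/-- For a permutation `π` of `{1,…,n}` (0-indexed as `Fin n`), `d j` is the number of
values `m < j` appearing to the right of `j` in the one-line word of `π`, i.e.
`d j = #{m : m < j and π⁻¹(m) > π⁻¹(j)}`. -/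
def dVector {n : ℕ} (π : Equiv.Perm (Fin n)) (j : Fin n) : ℕ :=
  (Finset.univ.filter fun m => m < j ∧ π⁻¹ j < π⁻¹ m).card

/-- `π` is 321-avoiding: there are no positions `i < j < k` with `π(i) > π(j) > π(k)`. -/
def Avoids321 {n : ℕ} (π : Equiv.Perm (Fin n)) : Prop :=
  ¬ ∃ i j k : Fin n, i < j ∧ j < k ∧ π k < π j ∧ π j < π i

/-- If `d v ≠ 0`, there is a witness `c < v` appearing after `v`. -/
lemma dVector_witness {n : ℕ} (π : Equiv.Perm (Fin n)) {v : Fin n}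
    (hd : dVector π v ≠ 0) : ∃ c, c < v ∧ π⁻¹ v < π⁻¹ c := by
  rw [dVector, Finset.card_ne_zero] at hd
  obtain ⟨c, hc⟩ := hd
  simp only [Finset.mem_filter] at hc
  exact ⟨c, hc.2⟩

/-- If `π` avoids 321 and `d v ≠ 0`, then `v` is a left-to-right maximum. -/
lemma lr_max {n : ℕ} {π : Equiv.Perm (Fin n)} (h : Avoids321 π) {v : Fin n}
    (hd : dVector π v ≠ 0) {a : Fin n} (hva : v < a) : π⁻¹ v < π⁻¹ a := by
  by_contra hle
  push_neg at hle
  have hne : π⁻¹ a ≠ π⁻¹ v := fun hh => absurd (π⁻¹.injective hh) (ne_of_gt hva)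
  have hlt : π⁻¹ a < π⁻¹ v := lt_of_le_of_ne hle hne
  obtain ⟨c, hcv, hpc⟩ := dVector_witness π hd
  exact h ⟨π⁻¹ a, π⁻¹ v, π⁻¹ c, hlt, hpc, by simpa using hcv, by simpa using hva⟩

lemma card_pos_lt {n : ℕ} (π : Equiv.Perm (Fin n)) (v : Fin n) :
    (Finset.univ.filter fun m : Fin n => π⁻¹ m < π⁻¹ v).card = (π⁻¹ v).val := by
  rw [← Fin.card_Iio (π⁻¹ v)]
  apply Finset.card_bij (fun m _ => π⁻¹ m)
  · intro m hm; simpa using (Finset.mem_filter.mp hm).2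
  · intro m₁ h₁ m₂ h₂ hh; exact π⁻¹.injective hh
  · intro p hp
    exact ⟨π p, by simpa using Finset.mem_Iio.mp hp, by simp⟩

/-- If `v` is a left-to-right maximum, `d v = v - π⁻¹ v`. -/
lemma dVector_of_lr_max {n : ℕ} (π : Equiv.Perm (Fin n)) {v : Fin n}
    (hLR : ∀ a, v < a → π⁻¹ v < π⁻¹ a) :
    dVector π v = v.val - (π⁻¹ v).val := by
  have hIio : (Finset.univ.filter fun m : Fin n => m < v) = Finset.Iio v := by
    ext m; simp
  have key : (Finset.univ.filter fun m : Fin n => π⁻¹ m < π⁻¹ v)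
      = (Finset.univ.filter fun m : Fin n => m < v).filter
        fun m : Fin n => ¬ π⁻¹ v < π⁻¹ m := by
    ext m
    simp only [Finset.mem_filter, Finset.mem_univ, true_and, not_lt]
    constructor
    · intro hm
      rcases lt_trichotomy m v with h | h | h
      · exact ⟨h, le_of_lt hm⟩
      · exact absurd (h ▸ hm) (lt_irrefl _)
      · exact absurd hm (not_lt.mpr (le_of_lt (hLR m h)))
    · rintro ⟨hmv, hle⟩
      refine lt_of_le_of_ne hle ?_
      intro hh
      exact absurd (π⁻¹.injective hh) (ne_of_lt hmv)
  have split : (Finset.univ.filter fun m : Fin n => m < v ∧ π⁻¹ v < π⁻¹ m).card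
      + (π⁻¹ v).val = v.val := by
    rw [← card_pos_lt π v, key, ← Fin.card_Iio v, ← hIio, ← Finset.filter_filter]
    exact Finset.card_filter_add_card_filter_not (fun m => π⁻¹ v < π⁻¹ m)
  rw [dVector]
  omega

theorem stmt_2 (n : ℕ) (hn : 1 ≤ n) (π : Equiv.Perm (Fin n)) :
    Avoids321 π ↔
      ∀ j j' : Fin n, j < j' → dVector π j ≠ 0 → dVector π j' ≠ 0 →
        (∀ k : Fin n, j < k → k < j' → dVector π k = 0) →
        dVector π j' - dVector π j ≤ j'.val - j.val - 1 := by
  constructor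
  · intro h j j' hjj' hdj hdj' _
    have hpp : π⁻¹ j < π⁻¹ j' := lr_max h hdj hjj'
    have e1 : dVector π j = j.val - (π⁻¹ j).val :=
      dVector_of_lr_max π fun a ha => lr_max h hdj ha
    have e2 : dVector π j' = j'.val - (π⁻¹ j').val :=
      dVector_of_lr_max π fun a ha => lr_max h hdj' ha
    have h1 : (π⁻¹ j).val < j.val := by omega
    have h2 : (π⁻¹ j').val < j'.val := by omega
    have h3 : (π⁻¹ j).val < (π⁻¹ j').val := hpp
    have h4 : j.val < j'.val := hjj'
    omega
  · intro H
    rintro ⟨i, j, k, hij, hjk, h1, h2⟩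
    -- the set of "bad" values
    set B : Finset (Fin n) :=
      Finset.univ.filter (fun v => dVector π v ≠ 0 ∧ ∃ a, v < a ∧ π⁻¹ a < π⁻¹ v) with hB
    have hBne : B.Nonempty := by
      refine ⟨π j, ?_⟩
      rw [hB, Finset.mem_filter]
      refine ⟨Finset.mem_univ _, ?_, π i, h2, by simpa using hij⟩
      rw [dVector, Finset.card_ne_zero]
      exact ⟨π k, by simp [h1, hjk]⟩
    set b := B.max' hBne with hbdef
    have hbB : b ∈ Finset.univ.filter
        (fun v => dVector π v ≠ 0 ∧ ∃ a, v < a ∧ π⁻¹ a < π⁻¹ v) := hB ▸ B.max'_mem hBne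
    obtain ⟨-, hdb, a₀, hba₀, hpa₀⟩ := Finset.mem_filter.mp hbB
    set T : Finset (Fin n) :=
      Finset.univ.filter (fun w => b < w ∧ π⁻¹ w < π⁻¹ b) with hT
    have hTne : T.Nonempty := ⟨a₀, by simpa [hT, hba₀] using hpa₀⟩
    set a := T.min' hTne with hadef
    have haT : a ∈ Finset.univ.filter
        (fun w => b < w ∧ π⁻¹ w < π⁻¹ b) := hT ▸ T.min'_mem hTne
    obtain ⟨-, hba, hpa⟩ := Finset.mem_filter.mp haT
    -- values strictly between b and a are after b in the word
    have hmid : ∀ m : Fin n, b < m → m < a → π⁻¹ b < π⁻¹ m := by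
      intro m hbm hma
      by_contra hle
      push_neg at hle
      have hne : π⁻¹ m ≠ π⁻¹ b := fun hh => absurd (π⁻¹.injective hh) (ne_of_gt hbm)
      have : m ∈ T := by simpa [hT, hbm] using lt_of_le_of_ne hle hne
      exact absurd (T.min'_le m this) (not_le.mpr hma)
    -- d a ≥ d b + (a - b)
    have hcard : dVector π b + (a.val - b.val) ≤ dVector π a := by
      have hsub : (Finset.univ.filter fun m => m < b ∧ π⁻¹ b < π⁻¹ m) ∪ Finset.Ico b a
          ⊆ Finset.univ.filter fun m => m < a ∧ π⁻¹ a < π⁻¹ m := by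
        intro m hm
        rcases Finset.mem_union.mp hm with hm | hm
        · simp only [Finset.mem_filter, Finset.mem_univ, true_and] at hm ⊢
          exact ⟨lt_trans hm.1 hba, lt_trans hpa hm.2⟩
        · rw [Finset.mem_Ico] at hm
          simp only [Finset.mem_filter, Finset.mem_univ, true_and]
          refine ⟨hm.2, ?_⟩
          rcases eq_or_lt_of_le hm.1 with hh | hh
          · rw [← hh]; exact hpa
          · exact lt_trans hpa (hmid m hh hm.2)
      have hdisj : Disjoint (Finset.univ.filter fun m => m < b ∧ π⁻¹ b < π⁻¹ m)
          (Finset.Ico b a) := by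
        rw [Finset.disjoint_left]
        intro m hm hm'
        rw [Finset.mem_Ico] at hm'
        simp only [Finset.mem_filter] at hm
        exact absurd hm.2.1 (not_lt.mpr hm'.1)
      have := Finset.card_le_card hsub
      rw [Finset.card_union_of_disjoint hdisj, Fin.card_Ico] at this
      exact this
    have hab : b.val < a.val := hba
    have hda : dVector π a ≠ 0 := by omega
    have hzero : ∀ k : Fin n, b < k → k < a → dVector π k = 0 := by
      intro m hbm hma
      by_contra hdm
      have hmB : m ∈ B := by
        rw [hB, Finset.mem_filter]
        exact ⟨Finset.mem_univ _, hdm, a, hma, lt_trans hpa (hmid m hbm hma)⟩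
      exact absurd (B.le_max' m hmB) (not_le.mpr hbm)
    have := H b a hba hdb hda hzero
    omega
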